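/- Let E be the strict inductive limit of an increasing sequence of Fréchet spaces (E_n), with each E_n a closed topological subspace of E_{n+1}. If (u_ε)_{ε∈(0,1]} ∈ E^{(0,1]} satisfies: for every convex neighbourhood U of 0 in E there is N∈ℕ with u_ε ∈ ε^{-N} U for small ε (moderateness), then there exist m∈ℕ and ε₀∈(0,1] such that u_ε ∈ E_m for all ε ≤ ε₀. -/

import Mathlib

open Pointwise

/-- In a strict inductive limit `E = ⋃ₙ Eₙ` of Fréchet spaces, any moderate net
`(u_ε)` eventually lies in a single `E_m`. -/
theorem stmt3 {E : Type*} [AddCommGroup E] [Module ℝ E] [UniformSpace E]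
    [IsUniformAddGroup E] [ContinuousSMul ℝ E] [LocallyConvexSpace ℝ E]
    (F : ℕ → Submodule ℝ E) (hmono : Monotone F)
    (hunion : ∀ x : E, ∃ n, x ∈ F n)
    (hclosed : ∀ n, IsClosed (F n : Set E))
    -- each `F n` (with the subspace topology) is a Fréchet space:
    (hfrechet : ∀ n, CompleteSpace (F n) ∧
      TopologicalSpace.PseudoMetrizableSpace (F n))
    -- characterization of the inductive limit topology on convex sets:
    (hind : ∀ U : Set E, Convex ℝ U → (0:E) ∈ U →
      (U ∈ nhds (0:E) ↔ ∀ n, ((↑) ⁻¹' U : Set (F n)) ∈ nhds (0 : F n)))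
    (u : ℝ → E)
    (hmod : ∀ U : Set E, Convex ℝ U → U ∈ nhds (0:E) → ∃ (N : ℕ) (ε₀ : ℝ), 0 < ε₀ ∧
      ∀ ε ∈ Set.Ioc (0:ℝ) 1, ε ≤ ε₀ → u ε ∈ (ε ^ (-(N:ℤ))) • U) :
    ∃ (m : ℕ) (ε₀ : ℝ), 0 < ε₀ ∧ ∀ ε ∈ Set.Ioc (0:ℝ) 1, ε ≤ ε₀ → u ε ∈ F m := by
  by_contra h
  push_neg at h
  -- build a sequence ε k ≤ 1/(k+2) with u (ε k) ∉ F k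
  have hseq : ∀ k : ℕ, ∃ ε : ℝ, ε ∈ Set.Ioc (0:ℝ) 1 ∧ ε ≤ 1/(k+2) ∧ u ε ∉ F k := by
    intro k
    obtain ⟨ε, hε, hle, hnot⟩ := h k (1/(k+2)) (by positivity)
    exact ⟨ε, hε, hle, hnot⟩
  choose e he hle hnot using hseq
  have hepos : ∀ k, 0 < e k := fun k => (he k).1
  have helt1 : ∀ k, e k < 1 := by
    intro k
    have h2 : (1:ℝ)/(k+2) ≤ 1/2 := by
      apply one_div_le_one_div_of_le
      · norm_num
      · push_cast; linarith
    linarith [hle k]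
  -- Hahn-Banach: functionals vanishing on F k with value 1 at u (e k)
  have hfun : ∀ k, ∃ g : E →L[ℝ] ℝ, (∀ x ∈ F k, g x = 0) ∧ g (u (e k)) = 1 := by
    intro k
    obtain ⟨f, t, hft, htx⟩ :=
      geometric_hahn_banach_closed_point (F k).convex (hclosed k) (hnot k)
    have ht0 : 0 < t := by simpa using hft 0 (F k).zero_mem
    have hvan : ∀ x ∈ F k, f x = 0 := by
      intro x hx
      by_contra hne
      have hc := hft (((t + |t| + 1) / f x) • x) ((F k).smul_mem _ hx)
      rw [map_smul] at hc
      rw [smul_eq_mul, div_mul_cancel₀ _ hne] at hc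
      have := abs_nonneg t
      have := le_abs_self t
      linarith
    have hfx : 0 < f (u (e k)) := lt_trans ht0 htx
    refine ⟨(f (u (e k)))⁻¹ • f, ?_, ?_⟩
    · intro x hx
      simp [hvan x hx]
    · simp [inv_mul_cancel₀ hfx.ne']
  choose g hg0 hg1 using hfun
  -- the convex set U
  set U : Set E := {x | ∀ k, |g k x| ≤ (e k) ^ k} with hU
  have h0U : (0:E) ∈ U := by
    intro k
    simp [pow_pos (hepos k) k |>.le]
  have hconv : Convex ℝ U := by
    intro x hx y hy a b ha hb hab
    intro k
    have : g k (a • x + b • y) = a * g k x + b * g k y := by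
      simp [map_add, map_smul]
    rw [this]
    calc |a * g k x + b * g k y| ≤ |a * g k x| + |b * g k y| := abs_add_le _ _
      _ = a * |g k x| + b * |g k y| := by
          rw [abs_mul, abs_mul, abs_of_nonneg ha, abs_of_nonneg hb]
      _ ≤ a * (e k ^ k) + b * (e k ^ k) := by
          gcongr <;> [exact hx k; exact hy k]
      _ = e k ^ k := by rw [← add_mul, hab, one_mul]
  -- U is a neighbourhood of 0
  have hUnhds : U ∈ nhds (0:E) := by
    rw [hind U hconv h0U]
    intro n
    have hfin : (⋂ k ∈ Finset.range n, {v : F n | |g k (v:E)| ≤ e k ^ k}) ∈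
        nhds (0 : F n) := by
      refine (Filter.biInter_finset_mem _).2 (fun k _ => ?_)
      have hcont : Continuous fun v : F n => g k (v : E) :=
        (g k).continuous.comp continuous_subtype_val
      have : {x : ℝ | |x| ≤ e k ^ k} ∈ nhds (0:ℝ) := by
        have hpos : 0 < e k ^ k := pow_pos (hepos k) k
        filter_upwards [Metric.closedBall_mem_nhds (0:ℝ) hpos] with x hx
        simpa [Real.dist_eq] using hx
      have h00 : (fun v : F n => g k (v : E)) 0 = 0 := by simp
      have := hcont.continuousAt (x := (0 : F n)) (h00 ▸ this)
      simpa using this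
    refine Filter.mem_of_superset hfin ?_
    intro v hv k
    by_cases hk : k < n
    · exact Set.mem_iInter₂.1 hv k (Finset.mem_range.2 hk)
    · have hvmem : (v : E) ∈ F k := hmono (le_of_not_gt hk) v.2
      rw [hg0 k _ hvmem]
      simpa using (pow_pos (hepos k) k).le
  -- moderateness gives the contradiction
  obtain ⟨N, ε₀, hε₀, hmem⟩ := hmod U hconv hUnhds
  obtain ⟨k₀, hk₀⟩ := exists_nat_ge (1/ε₀)
  set k := max (N+1) k₀ with hk
  have hkN : N < k := lt_of_lt_of_le (Nat.lt_succ_self N) (le_max_left _ _)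
  have hkk₀ : (k₀:ℝ) ≤ k := by exact_mod_cast le_max_right (N+1) k₀
  have hεle : e k ≤ ε₀ := by
    have h1 : (1:ℝ)/(k+2) ≤ ε₀ := by
      rw [div_le_iff₀ (by positivity)]
      have : 1/ε₀ ≤ (k:ℝ) + 2 := by linarith
      calc (1:ℝ) = ε₀ * (1/ε₀) := by field_simp
        _ ≤ ε₀ * ((k:ℝ)+2) := by gcongr
    linarith [hle k]
  have hin := hmem (e k) (he k) hεle
  rw [zpow_neg, zpow_natCast] at hin
  rw [Set.mem_smul_set_iff_inv_smul_mem₀ (inv_ne_zero (pow_pos (hepos k) N).ne')] at hin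
  rw [inv_inv] at hin
  have hkey := hin k
  rw [map_smul, hg1 k] at hkey
  have hpow : e k ^ N ≤ e k ^ k := by
    have : |e k ^ N • (1:ℝ)| = e k ^ N := by
      rw [smul_eq_mul, mul_one, abs_of_pos (pow_pos (hepos k) N)]
    rwa [this] at hkey
  have : e k ^ k < e k ^ N :=
    pow_lt_pow_right_of_lt_one₀ (hepos k) (helt1 k) hkN
  linarith
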